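/- For every δ with 0 < δ ≤ π there exists a constant c₂ > 0 such that ∫_0^δ a·k_L(a) da ≥ c₂·ln L for every integer L > 1, where k_L(a) = sin²(La/2)/sin²(a/2). -/

import Mathlib

open Real MeasureTheory

noncomputable section

/-- The Fejér-type kernel `k_L(a) = sin²(La/2)/sin²(a/2)`, with `k_L(0) = L²`. -/
def kernK (L : ℕ) (a : ℝ) : ℝ :=
  if a = 0 then (L : ℝ) ^ 2 else Real.sin ((L : ℝ) * a / 2) ^ 2 / Real.sin (a / 2) ^ 2

lemma kernK_nonneg (L : ℕ) (a : ℝ) : 0 ≤ kernK L a := by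
  unfold kernK; split
  · positivity
  · positivity

lemma sin_half_pos {a : ℝ} (h0 : 0 < a) (hπ : a ≤ π) : 0 < Real.sin (a / 2) :=
  Real.sin_pos_of_pos_of_lt_pi (by linarith) (by nlinarith [Real.pi_pos])

lemma sin_half_ge {a : ℝ} (h0 : 0 ≤ a) (hπ : a ≤ π) : a / π ≤ Real.sin (a / 2) := by
  have h := Real.mul_le_sin (x := a / 2) (by linarith) (by linarith)
  have e : 2 / π * (a / 2) = a / π := by ring
  rw [e] at h
  exact h

lemma kernK_le (L : ℕ) {a : ℝ} (h0 : 0 ≤ a) (hπ : a ≤ π) :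
    kernK L a ≤ ((L : ℝ) * π / 2) ^ 2 := by
  have hπ0 : (0:ℝ) < π := Real.pi_pos
  rcases eq_or_lt_of_le h0 with rfl | h0
  · rw [kernK, if_pos rfl]
    have hL : (0:ℝ) ≤ L := Nat.cast_nonneg L
    have e : ((L:ℝ) * π / 2) ^ 2 = (L:ℝ) ^ 2 * (π / 2) ^ 2 := by ring
    rw [e]
    have h1 : (1:ℝ) ≤ (π / 2) ^ 2 := by nlinarith [Real.pi_gt_three]
    nlinarith [mul_le_mul_of_nonneg_left h1 (sq_nonneg (L:ℝ))]
  · rw [kernK, if_neg h0.ne']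
    have hs : a / π ≤ Real.sin (a / 2) := sin_half_ge h0.le hπ
    have hsp : 0 < Real.sin (a / 2) := sin_half_pos h0 hπ
    have hs2 : (a / π) ^ 2 ≤ Real.sin (a / 2) ^ 2 := by
      apply pow_le_pow_left₀ (by positivity) hs
    have h1 : Real.sin ((L:ℝ) * a / 2) ^ 2 ≤ ((L:ℝ) * a / 2) ^ 2 := Real.sin_sq_le_sq
    rw [div_le_iff₀ (by positivity)]
    have key : ((L:ℝ) * π / 2) ^ 2 * (a / π) ^ 2 = ((L:ℝ) * a / 2) ^ 2 := by
      field_simp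
    nlinarith [sq_nonneg ((L:ℝ) * π / 2)]

lemma kern_measurable (L : ℕ) : Measurable fun a : ℝ => a * kernK L a := by
  apply measurable_id.mul
  unfold kernK
  apply Measurable.ite (measurableSet_eq) measurable_const
  exact ((Real.continuous_sin.comp (by continuity)).pow 2).measurable.div
    ((Real.continuous_sin.comp (by continuity)).pow 2).measurable

lemma kern_intervalIntegrable (L : ℕ) {u v : ℝ} (hu : 0 ≤ u) (huv : u ≤ v) (hv : v ≤ π) :
    IntervalIntegrable (fun a => a * kernK L a) volume u v := by
  rw [intervalIntegrable_iff_integrableOn_Icc_of_le huv]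
  apply Measure.integrableOn_of_bounded (μ := volume) (M := π * ((L:ℝ) * π / 2) ^ 2)
    measure_Icc_lt_top.ne (kern_measurable L).aestronglyMeasurable
  · rw [ae_restrict_iff' measurableSet_Icc]
    filter_upwards with a ha
    have h0 : 0 ≤ a := hu.trans ha.1
    have hπ : a ≤ π := ha.2.trans hv
    rw [Real.norm_eq_abs, abs_of_nonneg (mul_nonneg h0 (kernK_nonneg L a))]
    have := kernK_le L h0 hπ
    have h2 := kernK_nonneg L a
    nlinarith

lemma point_lower (L : ℕ) {b a : ℝ} (hb : 0 < b) (hbπ : b ≤ π) (h0 : 0 ≤ a) (hab : a ≤ b) :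
    4 / b * Real.sin ((L:ℝ) * a / 2) ^ 2 ≤ a * kernK L a := by
  rcases eq_or_lt_of_le h0 with rfl | h0
  · simp
  · rw [kernK, if_neg h0.ne']
    have hπ : a ≤ π := hab.trans hbπ
    have hsp : 0 < Real.sin (a / 2) := sin_half_pos h0 hπ
    have h2 : Real.sin (a / 2) ^ 2 ≤ (a / 2) ^ 2 := Real.sin_sq_le_sq
    have key : a * (Real.sin ((L:ℝ) * a / 2) ^ 2 / Real.sin (a / 2) ^ 2)
        = Real.sin ((L:ℝ) * a / 2) ^ 2 * (a / Real.sin (a / 2) ^ 2) := by ring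
    rw [key]
    calc 4 / b * Real.sin ((L:ℝ) * a / 2) ^ 2
        ≤ 4 / a * Real.sin ((L:ℝ) * a / 2) ^ 2 := by
          gcongr
      _ = Real.sin ((L:ℝ) * a / 2) ^ 2 * (a / (a / 2) ^ 2) := by
          rw [mul_comm]; congr 1; field_simp <;> ring
      _ ≤ Real.sin ((L:ℝ) * a / 2) ^ 2 * (a / Real.sin (a / 2) ^ 2) :=
          mul_le_mul_of_nonneg_left
            (div_le_div_of_nonneg_left h0.le (pow_pos hsp 2) h2) (sq_nonneg _)

lemma point_lower_small (L : ℕ) {a : ℝ} (h0 : 0 ≤ a) (ha : a ≤ π / L) (haπ : a ≤ π) :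
    4 * (L:ℝ) ^ 2 / π ^ 2 * a ≤ a * kernK L a := by
  rcases eq_or_lt_of_le h0 with rfl | h0
  · simp
  · have hπ0 : (0:ℝ) < π := Real.pi_pos
    have hL : 0 < L := by
      by_contra h
      push_neg at h
      interval_cases L
      simp at ha
      nlinarith
    have hL' : (0:ℝ) < L := by exact_mod_cast hL
    rw [kernK, if_neg h0.ne']
    have hsp : 0 < Real.sin (a / 2) := sin_half_pos h0 haπ
    have h2 : Real.sin (a / 2) ^ 2 ≤ (a / 2) ^ 2 := Real.sin_sq_le_sq
    have hLa : a * (L:ℝ) ≤ π := (le_div_iff₀ hL').mp ha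
    have hs : (L:ℝ) * a / π ≤ Real.sin ((L:ℝ) * a / 2) := by
      have h := Real.mul_le_sin (x := (L:ℝ) * a / 2) (by positivity) (by nlinarith)
      have e : 2 / π * ((L:ℝ) * a / 2) = (L:ℝ) * a / π := by ring
      rw [e] at h
      exact h
    have hs2 : ((L:ℝ) * a / π) ^ 2 ≤ Real.sin ((L:ℝ) * a / 2) ^ 2 :=
      pow_le_pow_left₀ (by positivity) hs 2
    have hkey : 4 * (L:ℝ) ^ 2 / π ^ 2 ≤ Real.sin ((L:ℝ) * a / 2) ^ 2 / Real.sin (a / 2) ^ 2 := by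
      calc 4 * (L:ℝ) ^ 2 / π ^ 2 = ((L:ℝ) * a / π) ^ 2 / (a / 2) ^ 2 := by
            field_simp <;> ring
        _ ≤ Real.sin ((L:ℝ) * a / 2) ^ 2 / Real.sin (a / 2) ^ 2 :=
            div_le_div₀ (sq_nonneg _) hs2 (pow_pos hsp 2) h2
    calc 4 * (L:ℝ) ^ 2 / π ^ 2 * a ≤ (Real.sin ((L:ℝ) * a / 2) ^ 2 / Real.sin (a / 2) ^ 2) * a := by
          gcongr
      _ = a * _ := mul_comm _ _

lemma integral_sin_sq_eq (L : ℕ) (hL : 0 < L) (u v : ℝ) :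
    ∫ a in u..v, Real.sin ((L:ℝ) * a / 2) ^ 2
      = (v / 2 - Real.sin ((L:ℝ) * v) / (2 * L)) - (u / 2 - Real.sin ((L:ℝ) * u) / (2 * L)) := by
  have hd : ∀ x : ℝ, HasDerivAt (fun y => y / 2 - Real.sin ((L:ℝ) * y) / (2 * L))
      (Real.sin ((L:ℝ) * x / 2) ^ 2) x := by
    intro x
    have h1 : HasDerivAt (fun y : ℝ => (L:ℝ) * y) (L:ℝ) x := by
      simpa using (hasDerivAt_id x).const_mul (L:ℝ)
    have h2 : HasDerivAt (fun y => Real.sin ((L:ℝ) * y)) (Real.cos ((L:ℝ) * x) * L) x :=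
      (Real.hasDerivAt_sin ((L:ℝ) * x)).comp x h1
    have h3 := ((hasDerivAt_id x).div_const 2).sub (h2.div_const (2 * L))
    refine h3.congr_deriv ?_
    rw [Real.sin_sq_eq_half_sub, show 2 * ((L:ℝ) * x / 2) = (L:ℝ) * x by ring]
    have h : ((L:ℝ)) ≠ 0 := Nat.cast_ne_zero.2 hL.ne'
    field_simp
  rw [intervalIntegral.integral_eq_sub_of_hasDerivAt (fun x _ => hd x)]
  exact ((Real.continuous_sin.comp (by continuity)).pow 2).intervalIntegrable u v

lemma integral_sin_sq_period (L : ℕ) (hL : 0 < L) (j : ℕ) :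
    ∫ a in (2 * π * j / L)..(2 * π * (j + 1) / L), Real.sin ((L:ℝ) * a / 2) ^ 2 = π / L := by
  have hL' : ((L:ℝ)) ≠ 0 := Nat.cast_ne_zero.2 hL.ne'
  rw [integral_sin_sq_eq L hL]
  have e1 : (L:ℝ) * (2 * π * j / L) = ((2 * j : ℕ) : ℝ) * π := by
    push_cast; field_simp
  have e2 : (L:ℝ) * (2 * π * (j + 1) / L) = ((2 * (j + 1) : ℕ) : ℝ) * π := by
    push_cast; field_simp
  rw [e1, e2, Real.sin_nat_mul_pi, Real.sin_nat_mul_pi]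
  field_simp
  ring

lemma log_le_harmonic (J : ℕ) :
    Real.log ((J:ℝ) + 1) ≤ ∑ j ∈ Finset.range J, 1 / ((j:ℝ) + 1) := by
  have tel := Finset.sum_range_sub (f := fun j : ℕ => Real.log ((j:ℝ) + 1)) J
  have h0 : Real.log (((0:ℕ):ℝ) + 1) = 0 := by norm_num
  calc Real.log ((J:ℝ) + 1) = ∑ j ∈ Finset.range J,
        (Real.log (((j:ℕ) + 1 : ℕ) + 1 : ℝ) - Real.log ((j:ℝ) + 1)) := by
        rw [tel, h0, sub_zero]
    _ ≤ ∑ j ∈ Finset.range J, 1 / ((j:ℝ) + 1) := by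
        apply Finset.sum_le_sum
        intro j _
        have hx : (0:ℝ) < (j:ℝ) + 1 := by positivity
        have hy : (0:ℝ) < (j:ℝ) + 2 := by positivity
        have hlog := Real.log_le_sub_one_of_pos (show (0:ℝ) < ((j:ℝ) + 2) / ((j:ℝ) + 1) by positivity)
        rw [Real.log_div hy.ne' hx.ne'] at hlog
        have e : ((j:ℝ) + 2) / ((j:ℝ) + 1) - 1 = 1 / ((j:ℝ) + 1) := by
          field_simp
          norm_num
        have ecast : (((j:ℕ) + 1 : ℕ) + 1 : ℝ) = (j:ℝ) + 2 := by push_cast; ring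
        rw [ecast]
        linarith

/-- For every `0 < δ ≤ π` there is `c₂ > 0` with
`∫_0^δ a k_L(a) da ≥ c₂ ln L` for every integer `L > 1`. -/
theorem kernel_weighted_integral_ge_log (δ : ℝ) (hδ0 : 0 < δ) (hδπ : δ ≤ π) :
    ∃ c₂ : ℝ, 0 < c₂ ∧
      ∀ L : ℕ, 1 < L → c₂ * Real.log L ≤ ∫ a in (0 : ℝ)..δ, a * kernK L a := by
  have hπ0 : (0:ℝ) < π := Real.pi_pos
  set C : ℝ := 2 * Real.log (2 * π / δ) with hCdef
  set m : ℝ := 2 * δ ^ 2 / π ^ 2 with hmdef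
  have hm : 0 < m := by positivity
  have hC : 0 < C := by
    have h1 : (1:ℝ) < 2 * π / δ := by
      rw [lt_div_iff₀ hδ0]; linarith
    have := Real.log_pos h1
    positivity
  refine ⟨min 1 (m / C), lt_min one_pos (by positivity), ?_⟩
  intro L hL
  have hL1 : (1:ℝ) < L := by exact_mod_cast hL
  have hL0 : (0:ℝ) < L := by linarith
  have hLn : 0 < L := by omega
  have hlogL : 0 ≤ Real.log L := Real.log_nonneg hL1.le
  have hInt : IntervalIntegrable (fun a => a * kernK L a) volume 0 δ :=
    kern_intervalIntegrable L le_rfl hδ0.le hδπ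
  have hae : ∀ᵐ x ∂(volume.restrict (Set.Ioc 0 δ)), 0 ≤ x * kernK L x := by
    rw [ae_restrict_iff' measurableSet_Ioc]
    filter_upwards with x hx
    exact mul_nonneg hx.1.le (kernK_nonneg _ _)
  -- Lower bound valid for all L : the integral is at least m
  have key1 : m ≤ ∫ a in (0:ℝ)..δ, a * kernK L a := by
    set t : ℝ := min δ (π / L) with ht
    have ht0 : 0 < t := lt_min hδ0 (by positivity)
    have htδ : t ≤ δ := min_le_left _ _
    have htπ : t ≤ π := htδ.trans hδπ
    have h1 : ∫ a in (0:ℝ)..t, 4 * (L:ℝ) ^ 2 / π ^ 2 * a ≤ ∫ a in (0:ℝ)..t, a * kernK L a := by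
      apply intervalIntegral.integral_mono_on ht0.le
      · exact (continuous_const.mul continuous_id).intervalIntegrable _ _
      · exact kern_intervalIntegrable L le_rfl ht0.le htπ
      · intro x hx
        exact point_lower_small L hx.1 (hx.2.trans (min_le_right _ _)) (hx.2.trans htπ)
    have h2 : ∫ a in (0:ℝ)..t, 4 * (L:ℝ) ^ 2 / π ^ 2 * a = 4 * (L:ℝ) ^ 2 / π ^ 2 * (t ^ 2 / 2) := by
      rw [intervalIntegral.integral_const_mul, integral_id]
      ring
    have h3 : ∫ a in (0:ℝ)..t, a * kernK L a ≤ ∫ a in (0:ℝ)..δ, a * kernK L a :=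
      intervalIntegral.integral_mono_interval le_rfl ht0.le htδ hae hInt
    have hLt : δ ≤ (L:ℝ) * t := by
      rcases le_total δ (π / L) with h | h
      · rw [ht, min_eq_left h]
        nlinarith
      · rw [ht, min_eq_right h]
        have e : (L:ℝ) * (π / L) = π := by field_simp
        rw [e]
        exact hδπ
    have h4 : m ≤ 4 * (L:ℝ) ^ 2 / π ^ 2 * (t ^ 2 / 2) := by
      rw [hmdef]
      have h5 : δ ^ 2 ≤ ((L:ℝ) * t) ^ 2 := by nlinarith
      have e : 4 * (L:ℝ) ^ 2 / π ^ 2 * (t ^ 2 / 2) = 2 * ((L:ℝ) * t) ^ 2 / π ^ 2 := by ring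
      rw [e]
      gcongr
    linarith
  -- Lower bound 2 log L - C
  have key2 : 2 * Real.log L - C ≤ ∫ a in (0:ℝ)..δ, a * kernK L a := by
    set aj : ℕ → ℝ := fun j => 2 * π * j / L with haj
    set J : ℕ := Nat.floor (δ * L / (2 * π)) with hJdef
    have hJle : (J:ℝ) ≤ δ * L / (2 * π) := Nat.floor_le (by positivity)
    have hajmono : ∀ j k : ℕ, j ≤ k → aj j ≤ aj k := by
      intro j k h
      simp only [haj]
      gcongr
    have hnonneg : ∀ j : ℕ, 0 ≤ aj j := by
      intro j; simp only [haj]; positivity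
    have hajJ : aj J ≤ δ := by
      simp only [haj]
      rw [div_le_iff₀ hL0]
      calc 2 * π * (J:ℝ) ≤ 2 * π * (δ * L / (2 * π)) := by gcongr
        _ = δ * L := by field_simp
    have haj0 : aj 0 = 0 := by simp [haj]
    have hint : ∀ k, k < J → IntervalIntegrable (fun a => a * kernK L a) volume (aj k) (aj (k+1)) := by
      intro k hk
      exact kern_intervalIntegrable L (hnonneg k) (hajmono k (k+1) (by omega))
        ((hajmono (k+1) J (by omega)).trans (hajJ.trans hδπ))
    have hsplit := intervalIntegral.sum_integral_adjacent_intervals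
      (μ := volume) (f := fun a => a * kernK L a) hint
    have hstep : ∀ j ∈ Finset.range J,
        2 / ((j:ℝ) + 1) ≤ ∫ a in (aj j)..(aj (j+1)), a * kernK L a := by
      intro j hj
      rw [Finset.mem_range] at hj
      have hb : 0 < aj (j+1) := by simp only [haj]; positivity
      have hbπ : aj (j+1) ≤ π := (hajmono _ J (by omega)).trans (hajJ.trans hδπ)
      have hmono : ∫ a in (aj j)..(aj (j+1)), 4 / (aj (j+1)) * Real.sin ((L:ℝ) * a / 2) ^ 2
          ≤ ∫ a in (aj j)..(aj (j+1)), a * kernK L a := by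
        apply intervalIntegral.integral_mono_on (hajmono j (j+1) (by omega))
        · exact (continuous_const.mul ((Real.continuous_sin.comp (by continuity)).pow 2)).intervalIntegrable _ _
        · exact hint j hj
        · intro x hx
          exact point_lower L hb hbπ ((hnonneg j).trans hx.1) hx.2
      have hval : ∫ a in (aj j)..(aj (j+1)), 4 / (aj (j+1)) * Real.sin ((L:ℝ) * a / 2) ^ 2
          = 4 / (aj (j+1)) * (π / L) := by
        rw [intervalIntegral.integral_const_mul]
        congr 1
        have := integral_sin_sq_period L hLn j
        simp only [haj]
        rw [← this]
        norm_num
      have hcomp : 4 / (aj (j+1)) * (π / L) = 2 / ((j:ℝ) + 1) := by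
        simp only [haj]
        push_cast
        field_simp
        ring
      rw [hval, hcomp] at hmono
      exact hmono
    have hsum : 2 * Real.log ((J:ℝ) + 1) ≤ ∫ a in (aj 0)..(aj J), a * kernK L a := by
      rw [← hsplit]
      calc 2 * Real.log ((J:ℝ) + 1) ≤ 2 * ∑ j ∈ Finset.range J, 1 / ((j:ℝ) + 1) := by
            linarith [log_le_harmonic J]
        _ = ∑ j ∈ Finset.range J, 2 / ((j:ℝ) + 1) := by
            rw [Finset.mul_sum]
            exact Finset.sum_congr rfl fun j _ => mul_one_div 2 _
        _ ≤ _ := Finset.sum_le_sum hstep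
    have hmono2 : ∫ a in (aj 0)..(aj J), a * kernK L a ≤ ∫ a in (0:ℝ)..δ, a * kernK L a := by
      rw [haj0]
      exact intervalIntegral.integral_mono_interval le_rfl (hnonneg J) hajJ hae hInt
    have hJ1 : δ * L / (2 * π) ≤ (J:ℝ) + 1 := (Nat.lt_floor_add_one _).le
    have hlog2 : Real.log L - Real.log (2 * π / δ) ≤ Real.log ((J:ℝ) + 1) := by
      have h1 : Real.log (δ * L / (2 * π)) ≤ Real.log ((J:ℝ) + 1) :=
        Real.log_le_log (by positivity) hJ1
      have e : δ * (L:ℝ) / (2 * π) = (L:ℝ) / (2 * π / δ) := by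
        field_simp
      rw [e, Real.log_div hL0.ne' (by positivity : (0:ℝ) < 2 * π / δ).ne'] at h1
      linarith
    rw [hCdef]
    linarith
  -- combine
  rcases le_or_gt C (Real.log L) with h | h
  · calc min 1 (m / C) * Real.log L ≤ 1 * Real.log L :=
        mul_le_mul_of_nonneg_right (min_le_left _ _) hlogL
      _ = Real.log L := one_mul _
      _ ≤ 2 * Real.log L - C := by linarith
      _ ≤ _ := key2
  · calc min 1 (m / C) * Real.log L ≤ m / C * Real.log L :=
        mul_le_mul_of_nonneg_right (min_le_right _ _) hlogL
      _ ≤ m / C * C := mul_le_mul_of_nonneg_left h.le (by positivity)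
      _ = m := by field_simp
      _ ≤ _ := key1
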